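/- arXiv:1009.4442 — 2 statements merged into one kernel-verified Lean document; each statement's English description precedes it below -/
import Mathlib

section
/- Let P(ξ) = Σ_{k=1}^N c_k ξ^{2k+1} with c_k ≤ −1 for all k (more generally c_k ≤ 0 with c_N ≤ −1), and Q(m,l) = P(m+l) − P(m) − P(l). Then for l ≥ 1 and integers m_1 > m_2 ≥ 0, one has |Q(m_1,l) − Q(m_2,l)| ≥ (m_1 − m_2)·l^{2N}. -/
/-- For `n ≥ 2`, `t ≥ 1`, `0 ≤ y ≤ x`, the difference
`((x+t)^n - x^n) - ((y+t)^n - y^n)` is at least `(x-y) * t^(n-1)`. -/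
lemma aux_pow (n : ℕ) (hn : 2 ≤ n) (t x y : ℝ) (ht : 1 ≤ t) (hy : 0 ≤ y)
    (hxy : y ≤ x) :
    (x - y) * t ^ (n - 1) ≤ ((x + t) ^ n - x ^ n) - ((y + t) ^ n - y ^ n) := by
  have ht0 : (0:ℝ) ≤ t := le_trans zero_le_one ht
  have hx0 : (0:ℝ) ≤ x := le_trans hy hxy
  have e1 : (x + t) ^ n - (y + t) ^ n
      = (∑ i ∈ Finset.range n, (x + t) ^ i * (y + t) ^ (n - 1 - i)) * (x - y) := by
    rw [show x - y = (x + t) - (y + t) by ring, ← geom_sum₂_mul]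
  have e2 : x ^ n - y ^ n
      = (∑ i ∈ Finset.range n, x ^ i * y ^ (n - 1 - i)) * (x - y) := by
    rw [geom_sum₂_mul]
  have hrw : ((x + t) ^ n - x ^ n) - ((y + t) ^ n - y ^ n)
      = (∑ i ∈ Finset.range n,
          ((x + t) ^ i * (y + t) ^ (n - 1 - i) - x ^ i * y ^ (n - 1 - i))) * (x - y) := by
    rw [Finset.sum_sub_distrib, sub_mul, ← e1, ← e2]; ring
  rw [hrw, mul_comm]
  apply mul_le_mul_of_nonneg_right _ (by linarith)
  -- the term `i = n-1` already dominates `t^(n-1)`, and all terms are nonneg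
  have hterm : ∀ i ∈ Finset.range n,
      (0:ℝ) ≤ (x + t) ^ i * (y + t) ^ (n - 1 - i) - x ^ i * y ^ (n - 1 - i) := by
    intro i _
    have h1 : x ^ i ≤ (x + t) ^ i :=
      pow_le_pow_left₀ hx0 (by linarith) i
    have h2 : y ^ (n - 1 - i) ≤ (y + t) ^ (n - 1 - i) :=
      pow_le_pow_left₀ hy (by linarith) _
    have := mul_le_mul h1 h2 (pow_nonneg hy _) (pow_nonneg (by linarith) i)
    linarith
  have hmem : n - 1 ∈ Finset.range n := by
    simp only [Finset.mem_range]; omega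
  have hsingle := Finset.single_le_sum hterm hmem
  have hkey : t ^ (n - 1) ≤
      (x + t) ^ (n - 1) * (y + t) ^ (n - 1 - (n - 1)) - x ^ (n - 1) * y ^ (n - 1 - (n - 1)) := by
    have : n - 1 - (n - 1) = 0 := by omega
    simp only [this, pow_zero, mul_one]
    have := pow_add_pow_le ht0 hx0 (n := n - 1) (by omega)
    have h' : (t + x) ^ (n - 1) = (x + t) ^ (n - 1) := by ring_nf
    linarith [h' ▸ this]
  linarith

theorem stmt_2 (N : ℕ) (hN : 1 ≤ N) (c : ℕ → ℝ)
    (hc : ∀ k ∈ Finset.Icc 1 N, c k ≤ -1)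
    (P : ℝ → ℝ) (hP : ∀ ξ : ℝ, P ξ = ∑ k ∈ Finset.Icc 1 N, c k * ξ ^ (2 * k + 1))
    (Q : ℤ → ℤ → ℝ)
    (hQ : ∀ m l : ℤ, Q m l = P ((m : ℝ) + (l : ℝ)) - P (m : ℝ) - P (l : ℝ))
    (l m₁ m₂ : ℤ) (hl : 1 ≤ l) (h₁₂ : m₂ < m₁) (hm₂ : 0 ≤ m₂) :
    ((m₁ : ℝ) - (m₂ : ℝ)) * (l : ℝ) ^ (2 * N) ≤ |Q m₁ l - Q m₂ l| := by
  set x := (m₁ : ℝ) with hx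
  set y := (m₂ : ℝ) with hy
  set t := (l : ℝ) with htdef
  have ht : (1:ℝ) ≤ t := by rw [htdef]; exact_mod_cast hl
  have hy0 : (0:ℝ) ≤ y := by rw [hy]; exact_mod_cast hm₂
  have hxy : y < x := by rw [hx, hy]; exact_mod_cast h₁₂
  set B : ℕ → ℝ := fun k =>
    ((x + t) ^ (2 * k + 1) - x ^ (2 * k + 1)) - ((y + t) ^ (2 * k + 1) - y ^ (2 * k + 1))
    with hB
  have hD : Q m₁ l - Q m₂ l = ∑ k ∈ Finset.Icc 1 N, c k * B k := by
    simp only [hQ, hP, hB, ← Finset.sum_sub_distrib]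
    apply Finset.sum_congr rfl
    intro k _
    ring
  have hBk : ∀ k ∈ Finset.Icc 1 N, (x - y) * t ^ (2 * k) ≤ B k := by
    intro k hk
    have hk1 : 1 ≤ k := (Finset.mem_Icc.mp hk).1
    have := aux_pow (2 * k + 1) (by omega) t x y ht hy0 hxy.le
    have h' : 2 * k + 1 - 1 = 2 * k := by omega
    rwa [h'] at this
  have hBnonneg : ∀ k ∈ Finset.Icc 1 N, (0:ℝ) ≤ B k := by
    intro k hk
    have h1 := hBk k hk
    have h2 : (0:ℝ) ≤ (x - y) * t ^ (2 * k) :=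
      mul_nonneg (by linarith) (pow_nonneg (by linarith) _)
    linarith
  have hub : Q m₁ l - Q m₂ l ≤ -((x - y) * t ^ (2 * N)) := by
    rw [hD]
    have step1 : ∑ k ∈ Finset.Icc 1 N, c k * B k ≤ ∑ k ∈ Finset.Icc 1 N, -(B k) := by
      apply Finset.sum_le_sum
      intro k hk
      have := mul_le_mul_of_nonneg_right (hc k hk) (hBnonneg k hk)
      linarith
    have hNmem : N ∈ Finset.Icc 1 N := Finset.mem_Icc.mpr ⟨hN, le_rfl⟩
    have step2 : B N ≤ ∑ k ∈ Finset.Icc 1 N, B k :=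
      Finset.single_le_sum hBnonneg hNmem
    have step3 : (x - y) * t ^ (2 * N) ≤ B N := hBk N hNmem
    rw [Finset.sum_neg_distrib] at step1
    linarith
  calc (x - y) * t ^ (2 * N) ≤ -(Q m₁ l - Q m₂ l) := by linarith
    _ ≤ |Q m₁ l - Q m₂ l| := neg_le_abs _
end

section
/- For functions u with \hat u(n,λ) supported in {|n| ≤ K, |λ| ≤ K^{2N+1}} and |\hat u| = 1 there (the example u_K), one has ‖u_K‖_{L⁴_x L⁴_t} ≳ K^{3(N+1)/2}, showing the exponent b = (N+1)/(4N+2) in the embedding X^{0,b} ⊆ L⁴_{x,t} cannot be decreased. -/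
open MeasureTheory Set Complex Real

noncomputable def Sf (M : ℝ) (t : ℝ) : ℂ :=
  ∫ lam in Set.Icc (-M) M, Complex.exp (2 * Real.pi * lam * t * Complex.I)

lemma cos_half {y : ℝ} (hy : |y| ≤ 1) : (1/2 : ℝ) ≤ Real.cos y := by
  have h1 := Real.one_sub_sq_div_two_le_cos (x := y)
  have h2 : y ^ 2 ≤ 1 := by nlinarith [abs_nonneg y, _root_.sq_abs y]
  linarith

lemma Sf_eq {M t : ℝ} (hM : 0 < M) (ht : t ≠ 0) :
    Sf M t = (Complex.exp (((2*Real.pi*t*M : ℝ) : ℂ) * Complex.I)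
      - Complex.exp (((-(2*Real.pi*t*M) : ℝ) : ℂ) * Complex.I))
      / (((2*Real.pi*t : ℝ) : ℂ) * Complex.I) := by
  have hc : (((2*Real.pi*t : ℝ) : ℂ) * Complex.I) ≠ 0 := by
    simp only [ne_eq, mul_eq_zero, Complex.I_ne_zero, or_false, Complex.ofReal_eq_zero]
    push_neg
    exact ⟨⟨two_ne_zero, Real.pi_ne_zero⟩, ht⟩
  have h1 : Sf M t = ∫ lam in (-M)..M, Complex.exp ((((2*Real.pi*t : ℝ) : ℂ) * Complex.I) * lam) := by
    rw [Sf, intervalIntegral.integral_of_le (by linarith), ← integral_Icc_eq_integral_Ioc]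
    congr 1; funext lam; congr 1; push_cast; ring
  rw [h1, integral_exp_mul_complex hc]
  congr 2
  · push_cast; ring
  · push_cast; ring

lemma Sf_norm_le_inv {M t : ℝ} (hM : 1 ≤ M) (ht : t ≠ 0) : ‖Sf M t‖ ≤ 1 / |t| := by
  rw [Sf_eq (by linarith) ht]
  rw [norm_div]
  have h1 : ‖(((2*Real.pi*t : ℝ) : ℂ) * Complex.I)‖ = 2 * Real.pi * |t| := by
    rw [norm_mul, Complex.norm_I, mul_one, Complex.norm_real, Real.norm_eq_abs,
      abs_mul, abs_mul]
    rw [abs_of_pos Real.pi_pos]; norm_num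
  rw [h1]
  have h2 : ‖Complex.exp (((2*Real.pi*t*M : ℝ) : ℂ) * Complex.I)
      - Complex.exp (((-(2*Real.pi*t*M) : ℝ) : ℂ) * Complex.I)‖ ≤ 2 := by
    refine (norm_sub_le _ _).trans ?_
    rw [Complex.norm_exp_ofReal_mul_I, Complex.norm_exp_ofReal_mul_I]
    norm_num
  have htpos : 0 < |t| := abs_pos.2 ht
  have hpi : (1:ℝ) ≤ Real.pi := by linarith [Real.pi_gt_three]
  rw [div_le_div_iff₀ (by positivity) htpos]
  calc ‖_ - _‖ * |t| ≤ 2 * |t| := by nlinarith [norm_nonneg (Complex.exp (((2*Real.pi*t*M : ℝ) : ℂ) * Complex.I) - Complex.exp (((-(2*Real.pi*t*M) : ℝ) : ℂ) * Complex.I))]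
    _ ≤ 1 * (2 * Real.pi * |t|) := by nlinarith

lemma norm_exp_arg (r : ℝ) : ‖Complex.exp ((r : ℂ) * Complex.I)‖ = 1 :=
  Complex.norm_exp_ofReal_mul_I r

lemma Sf_norm_le {M t : ℝ} (hM : 0 ≤ M) : ‖Sf M t‖ ≤ 2 * M := by
  have h := norm_setIntegral_le_of_norm_le_const_ae' (μ := volume)
    (s := Set.Icc (-M) M) (C := 1)
    (by rw [Real.volume_Icc]; exact ENNReal.ofReal_lt_top)
    (Filter.Eventually.of_forall fun lam => ?_)
    (f := fun lam : ℝ => Complex.exp (2 * Real.pi * lam * t * Complex.I))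
  · refine h.trans ?_
    rw [Real.volume_real_Icc, max_eq_left (by linarith)]
    linarith
  · intro _
    have : (2 * (Real.pi:ℂ) * lam * t * Complex.I) = ((2*Real.pi*lam*t : ℝ) : ℂ) * Complex.I := by
      push_cast; ring
    rw [this, Complex.norm_exp_ofReal_mul_I]

lemma Sf_aesm {M : ℝ} (hM : 1 ≤ M) : AEStronglyMeasurable (Sf M) volume := by
  set g : ℝ → ℂ := fun t => (Complex.exp (((2*Real.pi*t*M : ℝ) : ℂ) * Complex.I)
      - Complex.exp (((-(2*Real.pi*t*M) : ℝ) : ℂ) * Complex.I))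
      / (((2*Real.pi*t : ℝ) : ℂ) * Complex.I) with hg
  have hgm : AEStronglyMeasurable g volume := by
    apply Measurable.aestronglyMeasurable
    apply Measurable.div
    · fun_prop
    · fun_prop
  refine hgm.congr ?_
  have h0 : ∀ᵐ (t : ℝ), t ≠ 0 := by
    refine ae_iff.2 ?_
    simpa [not_not, Set.setOf_eq_eq_singleton] using measure_singleton (0:ℝ)
  filter_upwards [h0] with t ht
  rw [hg]
  exact (Sf_eq (by linarith) ht).symm

lemma Sf_pow4_integrable {M : ℝ} (hM : 1 ≤ M) :
    Integrable (fun t => ‖Sf M t‖ ^ 4) volume := by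
  refine Integrable.mono' (g := fun t => (4*(2*M)^4) * (1+t^2)⁻¹)
    ((integrable_inv_one_add_sq).const_mul _)
    (((continuous_pow 4).comp continuous_norm).comp_aestronglyMeasurable (Sf_aesm hM))
    (Filter.Eventually.of_forall fun t => ?_)
  rw [Real.norm_of_nonneg (by positivity)]
  have hM0 : (0:ℝ) < M := by linarith
  have hnn : (0:ℝ) ≤ ‖Sf M t‖ := norm_nonneg _
  have h5 : (0:ℝ) < 1 + t^2 := by positivity
  have hXpos : (0:ℝ) < (2*M)^4 := by positivity
  show ‖Sf M t‖ ^ 4 ≤ 4*(2*M)^4 * (1+t^2)⁻¹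
  by_cases h : |t| ≤ 1
  · have h1 : ‖Sf M t‖ ^ 4 ≤ (2*M)^4 := pow_le_pow_left₀ hnn (Sf_norm_le hM0.le) 4
    have h2 : 1 + t^2 ≤ 2 := by nlinarith [_root_.sq_abs t, abs_nonneg t]
    have h3 : (2:ℝ)⁻¹ ≤ (1+t^2)⁻¹ := by
      apply inv_anti₀ h5 h2
    nlinarith
  · push_neg at h
    have ht : t ≠ 0 := by intro h0; rw [h0, abs_zero] at h; linarith
    have h1 : ‖Sf M t‖ ≤ 1/|t| := Sf_norm_le_inv hM ht
    have h6 : 1 < t^2 := by nlinarith [_root_.sq_abs t]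
    have ht2 : (0:ℝ) < t^2 := lt_trans one_pos h6
    have ht4 : (0:ℝ) < t^4 := by nlinarith
    have heq : (1/|t|)^4 = (t^4)⁻¹ := by
      rw [div_pow, one_pow, ← _root_.abs_pow, abs_of_pos ht4, one_div]
    have h2 : ‖Sf M t‖^4 ≤ (t^4)⁻¹ :=
      le_of_le_of_eq (pow_le_pow_left₀ hnn h1 4) heq
    refine h2.trans ?_
    rw [show (4:ℝ)*(2*M)^4*(1+t^2)⁻¹ = (4*(2*M)^4)/(1+t^2) by
      rw [inv_eq_one_div]; ring]
    rw [inv_eq_one_div, div_le_div_iff₀ ht4 h5]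
    have h8 : (1:ℝ) ≤ M^4 := one_le_pow₀ hM
    nlinarith

lemma cos_ge_half {y : ℝ} (hy : |y| ≤ 1) : (1/2 : ℝ) ≤ Real.cos y := cos_half hy

lemma Sf_lower {M t : ℝ} (hM : 1 ≤ M) (ht : |t| ≤ 1/(8*M)) : M ≤ ‖Sf M t‖ := by
  have hM0 : (0:ℝ) < M := by linarith
  have hcont : Continuous fun lam : ℝ => Complex.exp (2 * Real.pi * lam * t * Complex.I) :=
    Complex.continuous_exp.comp (by fun_prop)
  have hint : IntegrableOn (fun lam : ℝ => Complex.exp (2 * Real.pi * lam * t * Complex.I))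
      (Set.Icc (-M) M) volume := hcont.integrableOn_Icc
  have hre := integral_re hint
  have hre2 : (Sf M t).re = ∫ lam in Set.Icc (-M) M, Real.cos (2*Real.pi*lam*t) := by
    rw [Sf]
    rw [show (∫ lam in Set.Icc (-M) M, Complex.exp (2*Real.pi*lam*t*Complex.I)).re
        = RCLike.re (∫ lam in Set.Icc (-M) M,
          Complex.exp (2*(Real.pi:ℂ)*(lam:ℂ)*(t:ℂ)*Complex.I)) from rfl]
    rw [← hre]
    apply setIntegral_congr_fun measurableSet_Icc
    intro lam _
    simp only [RCLike.re_to_complex]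
    rw [show (2 * (Real.pi:ℂ) * lam * t * Complex.I)
        = ((2*Real.pi*lam*t : ℝ) : ℂ) * Complex.I by push_cast; ring,
      Complex.exp_ofReal_mul_I_re]
  have hlow : M ≤ ∫ lam in Set.Icc (-M) M, Real.cos (2*Real.pi*lam*t) := by
    have h := setIntegral_ge_of_const_le (μ := volume) (c := 1/2)
      (f := fun lam : ℝ => Real.cos (2*Real.pi*lam*t)) (s := Set.Icc (-M) M)
      measurableSet_Icc
      (by rw [Real.volume_Icc]; exact ENNReal.ofReal_ne_top)
      (fun lam hlam => ?_)
      ((Real.continuous_cos.comp (by fun_prop)).integrableOn_Icc)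
    · rw [Real.volume_real_Icc, max_eq_left (by linarith), smul_eq_mul] at h
      have : M = 1/2 * (M - -M) := by ring
      linarith
    · apply cos_ge_half
      have h1 : |lam| ≤ M := abs_le.2 ⟨hlam.1, hlam.2⟩
      have habs : |2*Real.pi*lam*t| = 2*Real.pi*(|lam| * |t|) := by
        rw [abs_mul, abs_mul, abs_mul, _root_.abs_two, abs_of_pos Real.pi_pos]; ring
      rw [habs]
      have h2 : |lam| * |t| ≤ M * (1/(8*M)) :=
        mul_le_mul h1 ht (abs_nonneg t) hM0.le
      have h3 : M * (1/(8*M)) = 1/8 := by field_simp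
      nlinarith [Real.pi_le_four, Real.pi_pos, abs_nonneg lam, abs_nonneg t]
  calc M ≤ (Sf M t).re := by rw [hre2]; exact hlow
    _ ≤ |(Sf M t).re| := le_abs_self _
    _ ≤ ‖Sf M t‖ := Complex.abs_re_le_norm _
    _ = ‖Sf M t‖ := rfl

noncomputable def Df (K : ℕ) (x : AddCircle (1:ℝ)) : ℂ :=
  ∑ n ∈ Finset.Icc (-(K:ℤ)) (K:ℤ), fourier n x

lemma Df_continuous (K : ℕ) : Continuous (Df K) :=
  continuous_finset_sum _ fun n _ => map_continuous (fourier n)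

lemma Df_lower {K : ℕ} (hK : 1 ≤ K) {τ : ℝ} (hτ : |τ| ≤ 1/(8*K)) :
    (K:ℝ) ≤ ‖Df K (↑τ : AddCircle (1:ℝ))‖ := by
  have hKpos : (0:ℝ) < K := by exact_mod_cast hK
  have hre : (Df K (↑τ : AddCircle (1:ℝ))).re
      = ∑ n ∈ Finset.Icc (-(K:ℤ)) (K:ℤ), Real.cos (2*Real.pi*n*τ) := by
    rw [Df, Complex.re_sum]
    apply Finset.sum_congr rfl
    intro n _
    rw [fourier_coe_apply]
    rw [show (2 * (Real.pi:ℂ) * Complex.I * n * τ / (1:ℝ))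
        = ((2*Real.pi*n*τ : ℝ) : ℂ) * Complex.I by push_cast; ring,
      Complex.exp_ofReal_mul_I_re]
  have hcard : (Finset.Icc (-(K:ℤ)) (K:ℤ)).card = 2*K+1 := by
    rw [Int.card_Icc]; omega
  have hlow : (K:ℝ) ≤ (Df K (↑τ : AddCircle (1:ℝ))).re := by
    rw [hre]
    have hsum : ∑ n ∈ Finset.Icc (-(K:ℤ)) (K:ℤ), (1/2 : ℝ)
        ≤ ∑ n ∈ Finset.Icc (-(K:ℤ)) (K:ℤ), Real.cos (2*Real.pi*n*τ) := by
      apply Finset.sum_le_sum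
      intro n hn
      apply cos_ge_half
      rw [Finset.mem_Icc] at hn
      have h1 : |(n:ℝ)| ≤ K := by
        rw [← Int.cast_natCast, ← Int.cast_abs]
        exact_mod_cast abs_le.2 hn
      have habs : |2*Real.pi*n*τ| = 2*Real.pi*(|(n:ℝ)| * |τ|) := by
        rw [abs_mul, abs_mul, abs_mul, _root_.abs_two, abs_of_pos Real.pi_pos]; ring
      rw [habs]
      have h2 : |(n:ℝ)| * |τ| ≤ K * (1/(8*K)) :=
        mul_le_mul h1 hτ (abs_nonneg τ) hKpos.le
      have h3 : (K:ℝ) * (1/(8*K)) = 1/8 := by field_simp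
      nlinarith [Real.pi_le_four, Real.pi_pos, abs_nonneg (n:ℝ), abs_nonneg τ]
    rw [Finset.sum_const, hcard, nsmul_eq_mul] at hsum
    refine le_trans ?_ hsum
    push_cast
    linarith
  calc (K:ℝ) ≤ (Df K (↑τ : AddCircle (1:ℝ))).re := hlow
    _ ≤ |(Df K (↑τ : AddCircle (1:ℝ))).re| := le_abs_self _
    _ ≤ ‖Df K (↑τ : AddCircle (1:ℝ))‖ := Complex.abs_re_le_norm _
    _ = ‖Df K (↑τ : AddCircle (1:ℝ))‖ := rfl

theorem stmt_12 (N : ℕ) (hN : 1 ≤ N)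
    (u : ℕ → AddCircle (1 : ℝ) → ℝ → ℂ)
    (hu : ∀ (K : ℕ) (x : AddCircle (1 : ℝ)) (t : ℝ),
      u K x t = ∑ n ∈ Finset.Icc (-(K : ℤ)) (K : ℤ),
        ∫ lam in Set.Icc (-((K : ℝ) ^ (2 * N + 1))) ((K : ℝ) ^ (2 * N + 1)),
          fourier n x * Complex.exp (2 * Real.pi * lam * t * Complex.I)) :
    ∃ c : ℝ, 0 < c ∧ ∀ K : ℕ, 1 ≤ K →
      c * (K : ℝ) ^ ((3 * ((N : ℝ) + 1)) / 2) ≤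
        (∫ x : AddCircle (1 : ℝ), ∫ t : ℝ, ‖u K x t‖ ^ 4) ^ (1/4 : ℝ) := by
  haveI : Fact ((0:ℝ) < 1) := ⟨one_pos⟩
  refine ⟨1/2, by norm_num, ?_⟩
  intro K hK
  have hK1 : (1:ℝ) ≤ (K:ℝ) := by exact_mod_cast hK
  have hKpos : (0:ℝ) < K := by linarith
  set M : ℝ := (K:ℝ)^(2*N+1) with hM_def
  have hM1 : (1:ℝ) ≤ M := one_le_pow₀ hK1
  have hM0 : (0:ℝ) < M := by linarith
  -- factorization
  have hfac : ∀ (x : AddCircle (1:ℝ)) (t : ℝ), u K x t = Df K x * Sf M t := by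
    intro x t
    rw [hu, Df, Sf, Finset.sum_mul, ← hM_def]
    apply Finset.sum_congr rfl
    intro n _
    exact integral_const_mul _ _
  -- inner integral
  have hC : ∀ x : AddCircle (1:ℝ), (∫ t : ℝ, ‖u K x t‖ ^ 4)
      = ‖Df K x‖^4 * ∫ t : ℝ, ‖Sf M t‖^4 := by
    intro x
    simp_rw [hfac, norm_mul, mul_pow]
    exact integral_const_mul _ _
  have houter : (∫ x : AddCircle (1:ℝ), ∫ t : ℝ, ‖u K x t‖ ^ 4)
      = (∫ x : AddCircle (1:ℝ), ‖Df K x‖^4) * ∫ t : ℝ, ‖Sf M t‖^4 := by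
    simp_rw [hC]
    exact integral_mul_const _ _
  -- lower bound for the t-integral
  have hCint : Integrable (fun t => ‖Sf M t‖ ^ 4) volume := Sf_pow4_integrable hM1
  have hClow : M^3/4 ≤ ∫ t : ℝ, ‖Sf M t‖^4 := by
    have h1 : (∫ t in Set.Icc (-(1/(8*M))) (1/(8*M)), ‖Sf M t‖^4)
        ≤ ∫ t : ℝ, ‖Sf M t‖^4 :=
      setIntegral_le_integral hCint (Filter.Eventually.of_forall fun t => by positivity)
    have h2 := setIntegral_ge_of_const_le (μ := volume) (c := M^4)
      (f := fun t : ℝ => ‖Sf M t‖^4) (s := Set.Icc (-(1/(8*M))) (1/(8*M)))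
      measurableSet_Icc
      (by rw [Real.volume_Icc]; exact ENNReal.ofReal_ne_top)
      (fun t ht => by
        refine pow_le_pow_left₀ hM0.le ?_ 4
        exact Sf_lower hM1 (abs_le.2 ⟨ht.1, ht.2⟩))
      hCint.integrableOn
    have hpos8 : (0:ℝ) < 1/(8*M) := by positivity
    rw [Real.volume_real_Icc, max_eq_left (by linarith), smul_eq_mul] at h2
    have h3 : M^4 * (1/(8*M) - -(1/(8*M))) = M^3/4 := by field_simp; ring
    linarith
  -- lower bound for the x-integral
  have hA : (K:ℝ)^3/4 ≤ ∫ x : AddCircle (1:ℝ), ‖Df K x‖^4 := by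
    have hpre := AddCircle.integral_preimage 1 (-(1/2)) (fun x : AddCircle (1:ℝ) => ‖Df K x‖^4)
    rw [show (-(1/2:ℝ) + 1 = 1/2) by norm_num] at hpre
    rw [← hpre]
    have hcont : Continuous fun τ : ℝ => ‖Df K (↑τ : AddCircle (1:ℝ))‖^4 :=
      (((Df_continuous K).comp (AddCircle.continuous_mk' 1)).norm).pow 4
    have hint : IntegrableOn (fun τ : ℝ => ‖Df K (↑τ : AddCircle (1:ℝ))‖^4)
        (Set.Ioc (-(1/2)) (1/2)) volume := hcont.integrableOn_Ioc
    have hsub : Set.Icc (-(1/(8*(K:ℝ)))) (1/(8*(K:ℝ))) ⊆ Set.Ioc (-(1/2:ℝ)) (1/2) := by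
      intro τ hτ
      have h8 : (8:ℝ) ≤ 8*(K:ℝ) := by nlinarith
      have : (1:ℝ)/(8*(K:ℝ)) ≤ 1/8 := by
        apply div_le_div_of_nonneg_left (by norm_num) (by norm_num) h8
      constructor
      · have := hτ.1; linarith
      · have := hτ.2; linarith
    have h1 : (∫ τ in Set.Icc (-(1/(8*(K:ℝ)))) (1/(8*(K:ℝ))), ‖Df K (↑τ : AddCircle (1:ℝ))‖^4)
        ≤ ∫ τ in Set.Ioc (-(1/2:ℝ)) (1/2), ‖Df K (↑τ : AddCircle (1:ℝ))‖^4 :=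
      setIntegral_mono_set hint (Filter.Eventually.of_forall fun τ => by positivity)
        (HasSubset.Subset.eventuallyLE hsub)
    have h2 := setIntegral_ge_of_const_le (μ := volume) (c := (K:ℝ)^4)
      (f := fun τ : ℝ => ‖Df K (↑τ : AddCircle (1:ℝ))‖^4)
      (s := Set.Icc (-(1/(8*(K:ℝ)))) (1/(8*(K:ℝ))))
      measurableSet_Icc
      (by rw [Real.volume_Icc]; exact ENNReal.ofReal_ne_top)
      (fun τ hτ => by
        refine pow_le_pow_left₀ hKpos.le ?_ 4
        exact Df_lower hK (abs_le.2 ⟨hτ.1, hτ.2⟩))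
      (hint.mono_set hsub)
    have hpos8 : (0:ℝ) < 1/(8*(K:ℝ)) := by positivity
    rw [Real.volume_real_Icc, max_eq_left (by linarith), smul_eq_mul] at h2
    have h3 : (K:ℝ)^4 * (1/(8*(K:ℝ)) - -(1/(8*(K:ℝ)))) = (K:ℝ)^3/4 := by
      field_simp; ring
    linarith
  -- combine
  have hCpos : (0:ℝ) < M^3/4 := by positivity
  have htot : (K:ℝ)^(6*N+6)/16 ≤ ∫ x : AddCircle (1:ℝ), ∫ t : ℝ, ‖u K x t‖ ^ 4 := by
    rw [houter]
    have hmul : (K:ℝ)^3/4 * (M^3/4)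
        ≤ (∫ x : AddCircle (1:ℝ), ‖Df K x‖^4) * ∫ t : ℝ, ‖Sf M t‖^4 :=
      mul_le_mul hA hClow hCpos.le (le_trans (by positivity) hA)
    have hKM : (K:ℝ)^3/4 * (M^3/4) = (K:ℝ)^(6*N+6)/16 := by
      rw [hM_def, ← pow_mul, div_mul_div_comm, ← pow_add,
        show 3+(2*N+1)*3 = 6*N+6 from by ring]
      norm_num
    linarith
  -- rpow arithmetic
  have hrw : ((K:ℝ)^(6*N+6)/16 : ℝ) ^ (1/4 : ℝ)
      = 1/2 * (K:ℝ) ^ ((3 * ((N:ℝ) + 1)) / 2) := by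
    rw [Real.div_rpow (by positivity) (by norm_num)]
    have h16 : (16:ℝ) ^ (1/4:ℝ) = 2 := by
      rw [show (16:ℝ) = (2:ℝ)^(4:ℕ) by norm_num, ← Real.rpow_natCast (2:ℝ) 4,
        ← Real.rpow_mul (by norm_num)]
      norm_num
    rw [h16, ← Real.rpow_natCast (K:ℝ) (6*N+6), ← Real.rpow_mul hKpos.le]
    rw [show ((6*N+6 : ℕ) : ℝ) * (1/4) = (3 * ((N:ℝ) + 1)) / 2 by push_cast; ring]
    ring
  calc (1/2 : ℝ) * (K:ℝ) ^ ((3 * ((N:ℝ) + 1)) / 2)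
      = ((K:ℝ)^(6*N+6)/16 : ℝ) ^ (1/4 : ℝ) := hrw.symm
    _ ≤ (∫ x : AddCircle (1:ℝ), ∫ t : ℝ, ‖u K x t‖ ^ 4) ^ (1/4 : ℝ) :=
      Real.rpow_le_rpow (by positivity) htot (by norm_num)
end
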